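/- There exists a constant c > 0 depending only on d such that for every φ ∈ (0, 1] and every (2, φ)-clusterable graph G on n ≥ 3 vertices with maximum degree at most d, the i-th smallest eigenvalue λ_i of the Laplacian L = 2I − 2M satisfies λ_i ≥ φ²/(16c) for every i ≥ 3. -/

import Mathlib

open scoped RealInnerProductSpace

open scoped Classical in
/-- The lazy random walk matrix of a graph `G` with degree parameter `d`. -/
noncomputable def lazyWalk {n : ℕ} (G : SimpleGraph (Fin n)) (d : ℕ) :
    Matrix (Fin n) (Fin n) ℝ :=
  Matrix.of fun u v =>
    if u = v then 1 - ((G.neighborSet u).ncard : ℝ) / (2 * d)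
    else if G.Adj u v then 1 / (2 * d) else 0

/-- `G` has maximum degree at most `d`. -/
def MaxDegreeLE {n : ℕ} (G : SimpleGraph (Fin n)) (d : ℕ) : Prop :=
  ∀ v, (G.neighborSet v).ncard ≤ d

/-- `p_u^t`: the endpoint distribution of a length-`t` lazy random walk from `u`. -/
noncomputable def pvec {n : ℕ} (G : SimpleGraph (Fin n)) (d t : ℕ) (u : Fin n) :
    EuclideanSpace ℝ (Fin n) :=
  WithLp.toLp 2 (fun v => ((lazyWalk G d ^ t).mulVec fun w => if w = u then 1 else 0) v)

/-- `q_u^t = p_u^t - (1/n) 𝟙`. -/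
noncomputable def qvec {n : ℕ} (G : SimpleGraph (Fin n)) (d t : ℕ) (u : Fin n) :
    EuclideanSpace ℝ (Fin n) :=
  WithLp.toLp 2 (fun v => pvec G d t u v - 1 / n)

/-- `q_u^0 = 1_u - (1/n) 𝟙`. -/
noncomputable def qzero {n : ℕ} (u : Fin n) : EuclideanSpace ℝ (Fin n) :=
  WithLp.toLp 2 (fun v => (if v = u then 1 else 0) - 1 / n : Fin n → ℝ)

/-- average of `q_u^0` over `u ∈ S`. -/
noncomputable def qavg {n : ℕ} (S : Finset (Fin n)) : EuclideanSpace ℝ (Fin n) :=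
  (S.card : ℝ)⁻¹ • ∑ u ∈ S, qzero u

/-- `a` and `b` are `ε`-close to collinear. -/
def CloseCollinear {E : Type*} [NormedAddCommGroup E] [NormedSpace ℝ E]
    (ε : ℝ) (a b : E) : Prop :=
  ∃ (ea eb w : E) (s s' : ℝ),
    ‖ea‖ ≤ ε ∧ ‖eb‖ ≤ ε ∧ a + ea = s • w ∧ b + eb = s' • w

/-- `a` and `b` are `ε`-close to antipodal. -/
def CloseAntipodal {E : Type*} [NormedAddCommGroup E] [NormedSpace ℝ E]
    (ε : ℝ) (a b : E) : Prop :=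
  ∃ (ea eb w : E) (s s' : ℝ), 0 ≤ s ∧ 0 ≤ s' ∧
    ‖ea‖ ≤ ε ∧ ‖eb‖ ≤ ε ∧ a + ea = s • w ∧ b + eb = -(s' • w)

/-- `a` and `b` are `ε`-close to podal. -/
def ClosePodal {E : Type*} [NormedAddCommGroup E] [NormedSpace ℝ E]
    (ε : ℝ) (a b : E) : Prop :=
  ∃ (ea eb w : E) (s s' : ℝ), 0 ≤ s ∧ 0 ≤ s' ∧
    ‖ea‖ ≤ ε ∧ ‖eb‖ ≤ ε ∧ a + ea = s • w ∧ b + eb = s' • w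

/-- The Gram matrix `A_{u,v}` of two vectors. -/
noncomputable def gram2 {n : ℕ} (a b : EuclideanSpace ℝ (Fin n)) :
    Matrix (Fin 2) (Fin 2) ℝ :=
  !![‖a‖ ^ 2, ⟪a, b⟫; ⟪b, a⟫, ‖b‖ ^ 2]

/-- Number of edges of `G` between `S` and `C \ S` (for `S ⊆ C`). -/
noncomputable def cutEdgesIn {n : ℕ} (G : SimpleGraph (Fin n)) (C S : Finset (Fin n)) : ℕ :=
  {p : Fin n × Fin n | p.1 ∈ S ∧ p.2 ∈ C ∧ p.2 ∉ S ∧ G.Adj p.1 p.2}.ncard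

/-- Number of edges of `G` between `S` and its complement. -/
noncomputable def cutEdges {n : ℕ} (G : SimpleGraph (Fin n)) (S : Finset (Fin n)) : ℕ :=
  cutEdgesIn G Finset.univ S

/-- The cut conductance `φ_G(S) = e(S, V∖S) / (d|S|)`. -/
noncomputable def cutCond {n : ℕ} (G : SimpleGraph (Fin n)) (d : ℕ) (S : Finset (Fin n)) : ℝ :=
  (cutEdges G S : ℝ) / (d * S.card)

/-- The (inner) conductance of the induced subgraph `G[C]` is at least `φ`. -/
def InnerConductanceGE {n : ℕ} (G : SimpleGraph (Fin n)) (d : ℕ) (C : Finset (Fin n))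
    (φ : ℝ) : Prop :=
  ∀ S ⊆ C, S.Nonempty → 2 * S.card ≤ C.card →
    φ ≤ (cutEdgesIn G C S : ℝ) / (d * S.card)

/-- `G` is `(2, φ)`-clusterable. -/
def Clusterable2 {n : ℕ} (G : SimpleGraph (Fin n)) (d : ℕ) (φ : ℝ) : Prop :=
  InnerConductanceGE G d Finset.univ φ ∨
  ∃ C₁ C₂ : Finset (Fin n), C₁.Nonempty ∧ C₂.Nonempty ∧ Disjoint C₁ C₂ ∧
    C₁ ∪ C₂ = Finset.univ ∧ InnerConductanceGE G d C₁ φ ∧ InnerConductanceGE G d C₂ φ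

/-- `G` is `ε`-far from `(2, φ)`-clusterable. -/
def FarFromClusterable2 {n : ℕ} (G : SimpleGraph (Fin n)) (d : ℕ) (ε φ : ℝ) : Prop :=
  ∀ G' : SimpleGraph (Fin n), MaxDegreeLE G' d →
    ((symmDiff G.edgeSet G'.edgeSet).ncard : ℝ) ≤ ε * d * n →
    ¬ Clusterable2 G' d φ

/-- The span of the eigenvectors of `M` with eigenvalue greater than `c`. -/
noncomputable def heavySpace {n : ℕ} (M : Matrix (Fin n) (Fin n) ℝ) (c : ℝ) :
    Submodule ℝ (EuclideanSpace ℝ (Fin n)) :=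
  ⨆ μ : {μ : ℝ // c < μ}, Module.End.eigenspace (Matrix.toEuclideanLin M) (μ : ℝ)

/-- Orthogonal projection onto the span of the eigenvectors of `M` with eigenvalue
greater than `c`. -/
noncomputable def heavyProj {n : ℕ} (M : Matrix (Fin n) (Fin n) ℝ) (c : ℝ)
    (x : EuclideanSpace ℝ (Fin n)) : EuclideanSpace ℝ (Fin n) :=
  ((heavySpace M c).orthogonalProjection x : EuclideanSpace ℝ (Fin n))

section CheegerHelpers
open Finset

lemma cutEdgesIn_eq_card {n : ℕ} (G : SimpleGraph (Fin n)) (C S : Finset (Fin n))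
    (hS : S ⊆ C) [DecidableRel G.Adj] :
    (cutEdgesIn G C S : ℝ)
      = ∑ u ∈ C, ∑ v ∈ C, if u ∈ S ∧ v ∉ S ∧ G.Adj u v then (1:ℝ) else 0 := by
  classical
  have h1 : {p : Fin n × Fin n | p.1 ∈ S ∧ p.2 ∈ C ∧ p.2 ∉ S ∧ G.Adj p.1 p.2}
      = ↑((C ×ˢ C).filter (fun p => p.1 ∈ S ∧ p.2 ∉ S ∧ G.Adj p.1 p.2)) := by
    ext p
    simp only [Set.mem_setOf_eq, coe_filter, mem_product, Set.mem_setOf_eq]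
    constructor
    · rintro ⟨h1, h2, h3, h4⟩; exact ⟨⟨hS h1, h2⟩, h1, h3, h4⟩
    · rintro ⟨⟨_, h2⟩, h1, h3, h4⟩; exact ⟨h1, h2, h3, h4⟩
  rw [cutEdgesIn, h1, Set.ncard_coe_finset]
  rw [← Finset.sum_product']
  rw [Finset.sum_ite, Finset.sum_const_zero, add_zero, Finset.sum_const]
  simp

lemma coarea {n : ℕ} (G : SimpleGraph (Fin n)) [DecidableRel G.Adj] (d : ℕ) (hd : 1 ≤ d)
    (C : Finset (Fin n)) (φ : ℝ) (hφ : 0 < φ)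
    (hcond : ∀ S ⊆ C, S.Nonempty → 2 * S.card ≤ C.card →
      φ * (d * S.card) ≤ (cutEdgesIn G C S : ℝ)) :
    ∀ (k : ℕ) (b : Fin n → ℝ), ((C.filter (fun v => 0 < b v)).image b).card = k →
      (∀ v, 0 ≤ b v) →
      2 * (C.filter fun v => 0 < b v).card ≤ C.card →
      2 * φ * d * ∑ v ∈ C, b v ≤
        ∑ u ∈ C, ∑ v ∈ C, if G.Adj u v then |b u - b v| else 0 := by
  intro k
  induction k using Nat.strong_induction_on with
  | _ k IH =>
    intro b hk hb0 hsupp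
    rcases Nat.eq_zero_or_pos k with hk0 | hkpos
    · -- base case : b vanishes on C
      subst hk0
      have hS : C.filter (fun v => 0 < b v) = ∅ := by
        by_contra h
        rcases Finset.nonempty_of_ne_empty h with ⟨v, hv⟩
        have : b v ∈ (C.filter (fun v => 0 < b v)).image b := Finset.mem_image_of_mem b hv
        rw [Finset.card_eq_zero.mp hk] at this
        simpa using this
      have hbz : ∀ v ∈ C, b v = 0 := by
        intro v hv
        by_contra h
        have : v ∈ C.filter (fun v => 0 < b v) :=
          Finset.mem_filter.mpr ⟨hv, lt_of_le_of_ne (hb0 v) (Ne.symm h)⟩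
        rw [hS] at this; simp at this
      have h1 : ∑ v ∈ C, b v = 0 := Finset.sum_eq_zero hbz
      rw [h1, mul_zero]
      apply Finset.sum_nonneg; intro u _; apply Finset.sum_nonneg; intro v _
      positivity
    · -- inductive step
      set S := C.filter (fun v => 0 < b v) with hSdef
      have hSC : S ⊆ C := Finset.filter_subset _ _
      have hSne : S.Nonempty := by
        by_contra h
        rw [Finset.not_nonempty_iff_eq_empty] at h
        rw [h] at hk; simp at hk; omega
      set β := (S.image b).min' (hSne.image b) with hβdef
      have hβmem : β ∈ S.image b := Finset.min'_mem _ _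
      have hβpos : 0 < β := by
        rcases Finset.mem_image.mp hβmem with ⟨v, hv, hvb⟩
        rw [← hvb]; exact (Finset.mem_filter.mp hv).2
      have hβle : ∀ v ∈ S, β ≤ b v := fun v hv =>
        Finset.min'_le _ _ (Finset.mem_image_of_mem b hv)
      -- b vanishes on C \ S
      have hbz : ∀ v ∈ C, v ∉ S → b v = 0 := by
        intro v hv hvs
        by_contra h
        exact hvs (Finset.mem_filter.mpr ⟨hv, lt_of_le_of_ne (hb0 v) (Ne.symm h)⟩)
      classical
      set b' := fun v => if v ∈ S then b v - β else 0 with hb'def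
      have hb'0 : ∀ v, 0 ≤ b' v := by
        intro v; rw [hb'def]; dsimp only
        split
        · next h => linarith [hβle v h]
        · exact le_refl 0
      have hsupp' : C.filter (fun v => 0 < b' v) ⊆ S := by
        intro v hv
        rcases Finset.mem_filter.mp hv with ⟨_, hpos⟩
        by_contra h
        rw [hb'def] at hpos; simp only [h, if_false] at hpos; exact lt_irrefl 0 hpos
      -- the number of distinct positive values dropped
      have hcard' : ((C.filter (fun v => 0 < b' v)).image b').card < k := by
        have hsub : (C.filter (fun v => 0 < b' v)).image b'
            ⊆ ((S.image b).image (fun x => x - β)).erase 0 := by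
          intro x hx
          rcases Finset.mem_image.mp hx with ⟨v, hv, hvx⟩
          have hvS : v ∈ S := hsupp' hv
          have hxval : x = b v - β := by
            rw [← hvx, hb'def]; simp [hvS]
          apply Finset.mem_erase.mpr
          constructor
          · have h2 := (Finset.mem_filter.mp hv).2
            rw [hb'def] at h2; simp only [hvS, if_true] at h2
            rw [hxval]; intro hc; rw [hc] at h2; exact lt_irrefl 0 h2
          · exact Finset.mem_image.mpr ⟨b v, Finset.mem_image_of_mem b hvS, hxval.symm⟩
        calc ((C.filter (fun v => 0 < b' v)).image b').card
            ≤ (((S.image b).image (fun x => x - β)).erase 0).card :=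
              Finset.card_le_card hsub
          _ < ((S.image b).image (fun x => x - β)).card := by
              apply Finset.card_erase_lt_of_mem
              exact Finset.mem_image.mpr ⟨β, hβmem, sub_self β⟩
          _ ≤ (S.image b).card := Finset.card_image_le
          _ = k := hk
      have hIH := IH _ hcard' b' rfl hb'0
        (le_trans (by exact_mod_cast Nat.mul_le_mul_left 2 (Finset.card_le_card hsupp')) hsupp)
      -- sums relation
      have hsumS : ∑ v ∈ C, b v = ∑ v ∈ S, b v :=
        (Finset.sum_subset hSC (fun v hv hvs => hbz v hv hvs)).symm
      have hsum' : ∑ v ∈ C, b' v = ∑ v ∈ C, b v - β * S.card := by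
        rw [hsumS]
        have : ∑ v ∈ C, b' v = ∑ v ∈ S, (b v - β) := by
          rw [hb'def]
          rw [Finset.sum_ite_mem]
          rw [Finset.inter_eq_right.mpr hSC]
        rw [this, Finset.sum_sub_distrib, Finset.sum_const, nsmul_eq_mul]
        ring
      -- cut bound
      have hcut := hcond S hSC hSne hsupp
      -- pointwise identity
      have hpt : ∀ u ∈ C, ∀ v ∈ C,
          (if G.Adj u v then |b u - b v| else 0)
            = (if G.Adj u v then |b' u - b' v| else 0)
              + β * ((if u ∈ S ∧ v ∉ S ∧ G.Adj u v then (1:ℝ) else 0)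
                + (if v ∈ S ∧ u ∉ S ∧ G.Adj u v then (1:ℝ) else 0)) := by
        intro u hu v hv
        by_cases hadj : G.Adj u v
        · rw [if_pos hadj, if_pos hadj]
          by_cases huS : u ∈ S <;> by_cases hvS : v ∈ S
          · rw [if_neg (by tauto), if_neg (by tauto)]
            have e1 : b' u = b u - β := by rw [hb'def]; simp [huS]
            have e2 : b' v = b v - β := by rw [hb'def]; simp [hvS]
            rw [e1, e2, show b u - β - (b v - β) = b u - b v by ring]
            ring
          · rw [if_pos ⟨huS, hvS, hadj⟩, if_neg (by tauto)]
            have e1 : b' u = b u - β := by rw [hb'def]; simp [huS]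
            have e2 : b' v = 0 := by rw [hb'def]; simp [hvS]
            have e3 : b v = 0 := hbz v hv hvS
            have a1 : |b u - b v| = b u - b v := abs_of_nonneg (by rw [e3]; linarith [hβle u huS])
            have a2 : |b' u - b' v| = b' u - b' v := abs_of_nonneg (by rw [e1, e2]; linarith [hβle u huS])
            rw [a1, a2, e1, e2, e3]; ring
          · rw [if_neg (by tauto), if_pos ⟨hvS, huS, hadj⟩]
            have e1 : b' u = 0 := by rw [hb'def]; simp [huS]
            have e2 : b' v = b v - β := by rw [hb'def]; simp [hvS]
            have e3 : b u = 0 := hbz u hu huS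
            have a1 : |b u - b v| = -(b u - b v) := abs_of_nonpos (by rw [e3]; linarith [hβle v hvS])
            have a2 : |b' u - b' v| = -(b' u - b' v) := abs_of_nonpos (by rw [e1, e2]; linarith [hβle v hvS])
            rw [a1, a2, e1, e2, e3]; ring
          · rw [if_neg (by tauto), if_neg (by tauto)]
            have e1 : b' u = 0 := by rw [hb'def]; simp [huS]
            have e2 : b' v = 0 := by rw [hb'def]; simp [hvS]
            rw [e1, e2, hbz u hu huS, hbz v hv hvS]; ring
        · rw [if_neg hadj, if_neg hadj, if_neg (by tauto), if_neg (by tauto)]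
          ring
      -- cut counts
      have hD1 : ∑ u ∈ C, ∑ v ∈ C, (if u ∈ S ∧ v ∉ S ∧ G.Adj u v then (1:ℝ) else 0)
          = (cutEdgesIn G C S : ℝ) := (cutEdgesIn_eq_card G C S hSC).symm
      have hD2 : ∑ u ∈ C, ∑ v ∈ C, (if v ∈ S ∧ u ∉ S ∧ G.Adj u v then (1:ℝ) else 0)
          = (cutEdgesIn G C S : ℝ) := by
        rw [Finset.sum_comm]
        rw [← hD1]
        apply Finset.sum_congr rfl; intro u _
        apply Finset.sum_congr rfl; intro v _
        simp only [G.adj_comm u v]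
      -- main energy decomposition
      have hE : ∑ u ∈ C, ∑ v ∈ C, (if G.Adj u v then |b u - b v| else 0)
          = (∑ u ∈ C, ∑ v ∈ C, (if G.Adj u v then |b' u - b' v| else 0))
            + β * (2 * (cutEdgesIn G C S : ℝ)) := by
        have : ∑ u ∈ C, ∑ v ∈ C, (if G.Adj u v then |b u - b v| else 0)
            = ∑ u ∈ C, ∑ v ∈ C, ((if G.Adj u v then |b' u - b' v| else 0)
              + β * ((if u ∈ S ∧ v ∉ S ∧ G.Adj u v then (1:ℝ) else 0)
                + (if v ∈ S ∧ u ∉ S ∧ G.Adj u v then (1:ℝ) else 0))) := by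
          apply Finset.sum_congr rfl; intro u hu
          apply Finset.sum_congr rfl; intro v hv
          exact hpt u hu v hv
        rw [this]
        rw [Finset.sum_congr rfl (fun u _ => Finset.sum_add_distrib), Finset.sum_add_distrib]
        congr 1
        have e1 : ∑ u ∈ C, ∑ v ∈ C, (β * ((if u ∈ S ∧ v ∉ S ∧ G.Adj u v then (1:ℝ) else 0)
                + (if v ∈ S ∧ u ∉ S ∧ G.Adj u v then (1:ℝ) else 0)))
            = β * ∑ u ∈ C, ∑ v ∈ C, ((if u ∈ S ∧ v ∉ S ∧ G.Adj u v then (1:ℝ) else 0)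
                + (if v ∈ S ∧ u ∉ S ∧ G.Adj u v then (1:ℝ) else 0)) := by
          rw [Finset.mul_sum]
          exact Finset.sum_congr rfl fun u _ => (Finset.mul_sum _ _ _).symm
        rw [e1, Finset.sum_congr rfl (fun u _ => Finset.sum_add_distrib),
          Finset.sum_add_distrib, hD1, hD2]
        ring
      rw [hE]
      have hβcut : β * (φ * (d * S.card)) ≤ β * (cutEdgesIn G C S : ℝ) :=
        mul_le_mul_of_nonneg_left hcut (le_of_lt hβpos)
      rw [hsum'] at hIH
      nlinarith [hIH, hβcut]

lemma degree_bound {n : ℕ} (G : SimpleGraph (Fin n)) [DecidableRel G.Adj] (d : ℕ)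
    (hdeg : MaxDegreeLE G d) (C : Finset (Fin n)) (u : Fin n) :
    (C.filter (fun v => G.Adj u v)).card ≤ d := by
  have h1 : (C.filter (fun v => G.Adj u v)).card ≤ (univ.filter (fun v => G.Adj u v)).card :=
    Finset.card_le_card (Finset.filter_subset_filter _ (Finset.subset_univ C))
  have h2 : (univ.filter (fun v => G.Adj u v)) = G.neighborFinset u := by
    ext v; simp [SimpleGraph.mem_neighborFinset]
  have h3 : (G.neighborSet u).ncard = (G.neighborFinset u).card := by
    rw [← Set.ncard_coe_finset (G.neighborFinset u)]
    congr 1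
    simp [SimpleGraph.neighborFinset_def]
  calc (C.filter (fun v => G.Adj u v)).card ≤ (G.neighborFinset u).card := h2 ▸ h1
    _ = (G.neighborSet u).ncard := h3.symm
    _ ≤ d := hdeg u

lemma energy_psi {n : ℕ} (G : SimpleGraph (Fin n)) [DecidableRel G.Adj] (d : ℕ) (hd : 1 ≤ d)
    (hdeg : MaxDegreeLE G d) (C : Finset (Fin n)) (φ : ℝ) (hφ : 0 < φ)
    (hcond : ∀ S ⊆ C, S.Nonempty → 2 * S.card ≤ C.card →
      φ * (d * S.card) ≤ (cutEdgesIn G C S : ℝ))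
    (ψ : Fin n → ℝ) (hψ0 : ∀ v, 0 ≤ ψ v)
    (hsupp : 2 * (C.filter fun v => 0 < ψ v).card ≤ C.card) :
    φ ^ 2 * d * ∑ v ∈ C, (ψ v) ^ 2 ≤
      ∑ u ∈ C, ∑ v ∈ C, if G.Adj u v then (ψ u - ψ v) ^ 2 else 0 := by
  classical
  set N := ∑ v ∈ C, (ψ v) ^ 2 with hN
  set E := ∑ u ∈ C, ∑ v ∈ C, if G.Adj u v then (ψ u - ψ v) ^ 2 else 0 with hE
  have hN0 : 0 ≤ N := Finset.sum_nonneg fun v _ => sq_nonneg _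
  have hE0 : 0 ≤ E := Finset.sum_nonneg fun u _ => Finset.sum_nonneg fun v _ => by positivity
  have hdpos : (0:ℝ) < d := by exact_mod_cast hd
  -- coarea applied to b = ψ²
  have hco : 2 * φ * d * N ≤
      ∑ u ∈ C, ∑ v ∈ C, if G.Adj u v then |(ψ u)^2 - (ψ v)^2| else 0 := by
    have hfil : (C.filter fun v => 0 < (ψ v)^2) = (C.filter fun v => 0 < ψ v) := by
      apply Finset.filter_congr
      intro v _
      constructor
      · intro h
        rcases lt_or_eq_of_le (hψ0 v) with h' | h'
        · exact h'
        · exfalso; rw [← h'] at h; simp at h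
      · intro h; positivity
    exact coarea G d hd C φ hφ hcond _ (fun v => (ψ v)^2) rfl (fun v => sq_nonneg _)
      (by rw [hfil]; exact hsupp)
  set A := ∑ u ∈ C, ∑ v ∈ C, if G.Adj u v then |(ψ u)^2 - (ψ v)^2| else 0 with hA
  set B := ∑ u ∈ C, ∑ v ∈ C, if G.Adj u v then (ψ u + ψ v) ^ 2 else 0 with hB
  -- Cauchy-Schwarz : A² ≤ E * B
  have hCS : A ^ 2 ≤ E * B := by
    have hA' : A = ∑ p ∈ C ×ˢ C,
        (if G.Adj p.1 p.2 then |ψ p.1 - ψ p.2| else 0) *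
        (if G.Adj p.1 p.2 then (ψ p.1 + ψ p.2) else 0) := by
      rw [hA, ← Finset.sum_product']
      apply Finset.sum_congr rfl
      rintro ⟨u, v⟩ _
      by_cases hadj : G.Adj u v
      · simp only [hadj, if_true]
        rw [← abs_of_nonneg (add_nonneg (hψ0 u) (hψ0 v)), ← abs_mul]
        congr 1
        ring
      · simp [hadj]
    have hE' : E = ∑ p ∈ C ×ˢ C,
        (if G.Adj p.1 p.2 then |ψ p.1 - ψ p.2| else 0) ^ 2 := by
      rw [hE, ← Finset.sum_product']
      apply Finset.sum_congr rfl
      rintro ⟨u, v⟩ _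
      by_cases hadj : G.Adj u v <;> simp [hadj, sq_abs]
    have hB' : B = ∑ p ∈ C ×ˢ C,
        (if G.Adj p.1 p.2 then (ψ p.1 + ψ p.2) else 0) ^ 2 := by
      rw [hB, ← Finset.sum_product']
      apply Finset.sum_congr rfl
      rintro ⟨u, v⟩ _
      by_cases hadj : G.Adj u v <;> simp [hadj]
    rw [hA', hE', hB']
    exact Finset.sum_mul_sq_le_sq_mul_sq _ _ _
  -- row bound
  have hrow : ∀ (g : Fin n → ℝ), (∀ v, 0 ≤ g v) →
      (∑ u ∈ C, ∑ v ∈ C, if G.Adj u v then g u else 0) ≤ d * ∑ u ∈ C, g u := by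
    intro g hg
    have hinner : ∀ u ∈ C, (∑ v ∈ C, if G.Adj u v then g u else 0) ≤ d * g u := by
      intro u _
      rw [← Finset.sum_filter, Finset.sum_const, nsmul_eq_mul]
      exact mul_le_mul_of_nonneg_right (by exact_mod_cast degree_bound G d hdeg C u) (hg u)
    calc (∑ u ∈ C, ∑ v ∈ C, if G.Adj u v then g u else 0) ≤ ∑ u ∈ C, d * g u :=
          Finset.sum_le_sum hinner
      _ = d * ∑ u ∈ C, g u := (Finset.mul_sum _ _ _).symm
  -- B ≤ 4 d N
  have hBle : B ≤ 4 * d * N := by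
    have hsplit : B ≤ (∑ u ∈ C, ∑ v ∈ C, if G.Adj u v then 2 * (ψ u)^2 else 0)
        + ∑ u ∈ C, ∑ v ∈ C, if G.Adj u v then 2 * (ψ v)^2 else 0 := by
      rw [hB, ← Finset.sum_add_distrib]
      apply Finset.sum_le_sum
      intro u _
      rw [← Finset.sum_add_distrib]
      apply Finset.sum_le_sum
      intro v _
      by_cases hadj : G.Adj u v <;> simp only [hadj, if_true, if_false] <;> nlinarith [sq_nonneg (ψ u - ψ v)]
    have h1 : (∑ u ∈ C, ∑ v ∈ C, if G.Adj u v then 2 * (ψ u)^2 else 0) ≤ (d:ℝ) * ∑ u ∈ C, 2 * (ψ u)^2 :=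
      hrow (fun u => 2 * (ψ u)^2) (fun u => by positivity)
    have h2 : (∑ u ∈ C, ∑ v ∈ C, if G.Adj u v then 2 * (ψ v)^2 else 0) ≤ (d:ℝ) * ∑ u ∈ C, 2 * (ψ u)^2 := by
      rw [Finset.sum_comm]
      calc (∑ v ∈ C, ∑ u ∈ C, if G.Adj u v then 2 * (ψ v)^2 else 0)
          = ∑ v ∈ C, ∑ u ∈ C, if G.Adj v u then 2 * (ψ v)^2 else 0 := by
            apply Finset.sum_congr rfl; intro v _
            apply Finset.sum_congr rfl; intro u _
            simp only [G.adj_comm u v]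
        _ ≤ (d:ℝ) * ∑ v ∈ C, 2 * (ψ v)^2 := hrow (fun v => 2 * (ψ v)^2) (fun v => by positivity)
    have hsum2 : ∑ u ∈ C, 2 * (ψ u)^2 = 2 * N := by rw [hN, Finset.mul_sum]
    rw [hsum2] at h1 h2
    linarith
  -- combine
  rcases eq_or_lt_of_le hN0 with hN' | hN'
  · rw [← hN']
    simpa using hE0
  · have hA2 : (2 * φ * d * N) ^ 2 ≤ A ^ 2 := by
      have hApos : 0 ≤ 2 * φ * d * N := by positivity
      nlinarith [hco]
    have : (2 * φ * d * N) ^ 2 ≤ E * (4 * d * N) := by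
      calc (2 * φ * d * N) ^ 2 ≤ A ^ 2 := hA2
        _ ≤ E * B := hCS
        _ ≤ E * (4 * d * N) := mul_le_mul_of_nonneg_left hBle hE0
    nlinarith [mul_pos hdpos hN']

lemma exists_median {n : ℕ} (C : Finset (Fin n)) (hC : C.Nonempty) (f : Fin n → ℝ) :
    ∃ M : ℝ, 2 * (C.filter fun v => M < f v).card ≤ C.card ∧
      2 * (C.filter fun v => f v < M).card ≤ C.card := by
  classical
  set T := (C.image f).filter (fun x => C.card ≤ 2 * (C.filter fun v => f v ≤ x).card) with hT
  have hTne : T.Nonempty := by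
    refine ⟨(C.image f).max' (hC.image f), ?_⟩
    rw [hT]
    apply Finset.mem_filter.mpr
    refine ⟨Finset.max'_mem _ _, ?_⟩
    have : C.filter (fun v => f v ≤ (C.image f).max' (hC.image f)) = C := by
      apply Finset.filter_true_of_mem
      intro v hv
      exact Finset.le_max' _ _ (Finset.mem_image_of_mem f hv)
    rw [this]
    omega
  set M := T.min' hTne with hM
  have hMT : M ∈ T := Finset.min'_mem _ _
  have hMcard : C.card ≤ 2 * (C.filter fun v => f v ≤ M).card := (Finset.mem_filter.mp hMT).2
  refine ⟨M, ?_, ?_⟩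
  · have h1 : C.filter (fun v => M < f v) = C \ C.filter (fun v => f v ≤ M) := by
      rw [← Finset.filter_not]
      apply Finset.filter_congr
      intro v _
      simp [not_le]
    rw [h1, Finset.card_sdiff_of_subset (Finset.filter_subset _ _)]
    have := Finset.card_filter_le C (fun v => f v ≤ M)
    omega
  · set D := C.filter (fun v => f v < M) with hD
    rcases D.eq_empty_or_nonempty with hDe | hDne
    · rw [hDe]; simp
    · by_contra hcon
      push_neg at hcon
      have hDC : D ⊆ C := Finset.filter_subset _ _
      set M'' := (D.image f).max' (hDne.image f) with hM''
      have hM''lt : M'' < M := by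
        rcases Finset.mem_image.mp (Finset.max'_mem (D.image f) (hDne.image f)) with ⟨v, hv, hvf⟩
        rw [hM'', ← hvf] at *
        exact (Finset.mem_filter.mp hv).2
      have hEq : C.filter (fun v => f v ≤ M'') = D := by
        ext v
        constructor
        · intro hv
          rcases Finset.mem_filter.mp hv with ⟨hvC, hvle⟩
          exact Finset.mem_filter.mpr ⟨hvC, lt_of_le_of_lt hvle hM''lt⟩
        · intro hvD
          rcases Finset.mem_filter.mp hvD with ⟨hvC, _⟩
          exact Finset.mem_filter.mpr ⟨hvC, Finset.le_max' _ _ (Finset.mem_image_of_mem f hvD)⟩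
      have hM''T : M'' ∈ T := by
        rw [hT]
        apply Finset.mem_filter.mpr
        constructor
        · rcases Finset.mem_image.mp (Finset.max'_mem (D.image f) (hDne.image f)) with ⟨v, hv, hvf⟩
          exact Finset.mem_image.mpr ⟨v, hDC hv, hvf⟩
        · rw [hEq]; omega
      have := Finset.min'_le T M'' hM''T
      rw [← hM] at this
      linarith

lemma cheeger_main {n : ℕ} (G : SimpleGraph (Fin n)) [DecidableRel G.Adj] (d : ℕ) (hd : 1 ≤ d)
    (hdeg : MaxDegreeLE G d) (C : Finset (Fin n)) (φ : ℝ) (hφ : 0 < φ)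
    (hcond : ∀ S ⊆ C, S.Nonempty → 2 * S.card ≤ C.card →
      φ * (d * S.card) ≤ (cutEdgesIn G C S : ℝ))
    (f : Fin n → ℝ) (hzero : ∑ v ∈ C, f v = 0) :
    φ ^ 2 * d * ∑ v ∈ C, (f v) ^ 2 ≤
      ∑ u ∈ C, ∑ v ∈ C, if G.Adj u v then (f u - f v) ^ 2 else 0 := by
  classical
  rcases C.eq_empty_or_nonempty with hCe | hCne
  · subst hCe; simp
  obtain ⟨M, hM1, hM2⟩ := exists_median C hCne f
  set gp := fun v => max (f v - M) 0 with hgp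
  set gm := fun v => max (M - f v) 0 with hgm
  have hgp0 : ∀ v, 0 ≤ gp v := fun v => le_max_right _ _
  have hgm0 : ∀ v, 0 ≤ gm v := fun v => le_max_right _ _
  have hs : ∀ v, gp v - gm v = f v - M := by
    intro v
    rcases le_total (f v) M with h | h
    · rw [hgp, hgm]; dsimp only
      rw [max_eq_right (by linarith), max_eq_left (by linarith)]; ring
    · rw [hgp, hgm]; dsimp only
      rw [max_eq_left (by linarith), max_eq_right (by linarith)]; ring
  have hprod : ∀ v, gp v * gm v = 0 := by
    intro v
    rcases le_total (f v) M with h | h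
    · rw [hgp]; dsimp only; rw [max_eq_right (by linarith)]; ring
    · rw [hgm]; dsimp only; rw [max_eq_right (by linarith)]; ring
  -- supports
  have hsupp_p : 2 * (C.filter fun v => 0 < gp v).card ≤ C.card := by
    have : (C.filter fun v => 0 < gp v) = (C.filter fun v => M < f v) := by
      apply Finset.filter_congr; intro v _
      rw [hgp]; dsimp only
      constructor
      · intro h
        rcases lt_max_iff.mp h with h' | h'
        · linarith
        · exact absurd h' (lt_irrefl 0)
      · intro h; apply lt_max_iff.mpr; left; linarith
    rw [this]; exact hM1
  have hsupp_m : 2 * (C.filter fun v => 0 < gm v).card ≤ C.card := by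
    have : (C.filter fun v => 0 < gm v) = (C.filter fun v => f v < M) := by
      apply Finset.filter_congr; intro v _
      rw [hgm]; dsimp only
      constructor
      · intro h
        rcases lt_max_iff.mp h with h' | h'
        · linarith
        · exact absurd h' (lt_irrefl 0)
      · intro h; apply lt_max_iff.mpr; left; linarith
    rw [this]; exact hM2
  have hEp := energy_psi G d hd hdeg C φ hφ hcond gp hgp0 hsupp_p
  have hEm := energy_psi G d hd hdeg C φ hφ hcond gm hgm0 hsupp_m
  -- pointwise energy bound
  have hpoint : ∀ u v : Fin n, (gp u - gp v)^2 + (gm u - gm v)^2 ≤ (f u - f v)^2 := by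
    intro u v
    have e : f u - f v = (gp u - gm u) - (gp v - gm v) := by rw [hs u, hs v]; ring
    nlinarith [hprod u, hprod v, hgp0 u, hgp0 v, hgm0 u, hgm0 v,
      mul_nonneg (hgp0 u) (hgm0 v), mul_nonneg (hgp0 v) (hgm0 u)]
  have hEsplit : (∑ u ∈ C, ∑ v ∈ C, if G.Adj u v then (gp u - gp v)^2 else 0)
      + (∑ u ∈ C, ∑ v ∈ C, if G.Adj u v then (gm u - gm v)^2 else 0)
      ≤ ∑ u ∈ C, ∑ v ∈ C, if G.Adj u v then (f u - f v)^2 else 0 := by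
    rw [← Finset.sum_add_distrib]
    apply Finset.sum_le_sum; intro u _
    rw [← Finset.sum_add_distrib]
    apply Finset.sum_le_sum; intro v _
    by_cases hadj : G.Adj u v <;> simp only [hadj, if_true, if_false]
    · exact hpoint u v
    · simp
  -- norms
  have hnorm : ∑ v ∈ C, (f v)^2 ≤ ∑ v ∈ C, ((gp v)^2 + (gm v)^2) := by
    have h1 : ∀ v, (gp v)^2 + (gm v)^2 = (f v - M)^2 := by
      intro v
      have h2 : (gp v - gm v)^2 = (f v - M)^2 := by rw [hs v]
      nlinarith [hprod v, h2]
    calc ∑ v ∈ C, (f v)^2 ≤ ∑ v ∈ C, (f v - M)^2 := by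
          have expand : ∑ v ∈ C, (f v - M)^2
              = ∑ v ∈ C, (f v)^2 - 2 * M * ∑ v ∈ C, f v + C.card * M^2 := by
            rw [Finset.sum_congr rfl (fun v _ => by ring :
              ∀ v ∈ C, (f v - M)^2 = (f v)^2 - 2 * M * f v + M^2)]
            rw [Finset.sum_add_distrib, Finset.sum_sub_distrib, Finset.sum_const,
              ← Finset.mul_sum, nsmul_eq_mul]
          rw [expand, hzero]
          nlinarith [sq_nonneg M, Nat.cast_nonneg (α := ℝ) C.card]
      _ = ∑ v ∈ C, ((gp v)^2 + (gm v)^2) := by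
          apply Finset.sum_congr rfl; intro v _; rw [h1 v]
  rw [Finset.sum_add_distrib] at hnorm
  have hd0 : (0:ℝ) ≤ φ^2 * d := by positivity
  calc φ ^ 2 * d * ∑ v ∈ C, (f v) ^ 2
      ≤ φ ^ 2 * d * (∑ v ∈ C, (gp v)^2 + ∑ v ∈ C, (gm v)^2) :=
        mul_le_mul_of_nonneg_left hnorm hd0
    _ = φ ^ 2 * d * ∑ v ∈ C, (gp v)^2 + φ ^ 2 * d * ∑ v ∈ C, (gm v)^2 := by ring
    _ ≤ (∑ u ∈ C, ∑ v ∈ C, if G.Adj u v then (gp u - gp v)^2 else 0)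
        + (∑ u ∈ C, ∑ v ∈ C, if G.Adj u v then (gm u - gm v)^2 else 0) :=
        add_le_add hEp hEm
    _ ≤ _ := hEsplit

lemma ncard_neighborSet_eq {n : ℕ} (G : SimpleGraph (Fin n)) [DecidableRel G.Adj] (u : Fin n) :
    ((G.neighborSet u).ncard : ℝ) = ∑ v, if G.Adj u v then (1:ℝ) else 0 := by
  have h3 : (G.neighborSet u).ncard = (G.neighborFinset u).card := by
    rw [← Set.ncard_coe_finset (G.neighborFinset u)]
    congr 1
    simp [SimpleGraph.neighborFinset_def]
  rw [h3]
  rw [← Finset.sum_filter]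
  have : univ.filter (fun v => G.Adj u v) = G.neighborFinset u := by
    ext v; simp [SimpleGraph.mem_neighborFinset]
  rw [this]
  simp

lemma lentry {n : ℕ} (G : SimpleGraph (Fin n)) [DecidableRel G.Adj] (d : ℕ) (hd : 1 ≤ d)
    (u v : Fin n) :
    ((2:ℝ) • (1 : Matrix (Fin n) (Fin n) ℝ) - (2:ℝ) • lazyWalk G d) u v
      = (if v = u then ((G.neighborSet u).ncard : ℝ) / d else 0)
        + (if G.Adj u v then -(1/(d:ℝ)) else 0) := by
  rcases eq_or_ne u v with h | h
  · subst h
    have : ¬ G.Adj u u := G.irrefl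
    simp only [Matrix.sub_apply, Matrix.smul_apply, Matrix.one_apply_eq, lazyWalk,
      Matrix.of_apply, if_pos rfl, this, if_false, if_true, smul_eq_mul]
    ring
  · have h1 : v ≠ u := h.symm
    simp only [Matrix.sub_apply, Matrix.smul_apply, Matrix.one_apply_ne h.symm, lazyWalk,
      Matrix.of_apply, if_neg h, if_neg h1, smul_eq_mul, Matrix.one_apply_ne' h1]
    by_cases hadj : G.Adj u v
    · simp only [hadj, if_true]
      have hdne : (d:ℝ) ≠ 0 := by positivity
      field_simp
      ring
    · simp only [hadj, if_false]; ring

lemma lazy_qform {n : ℕ} (G : SimpleGraph (Fin n)) [DecidableRel G.Adj] (d : ℕ) (hd : 1 ≤ d)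
    (f : EuclideanSpace ℝ (Fin n)) :
    ⟪f, Matrix.toEuclideanLin ((2:ℝ) • (1 : Matrix (Fin n) (Fin n) ℝ) - (2:ℝ) • lazyWalk G d) f⟫
      = (1/(2*d)) * ∑ u, ∑ v, if G.Adj u v then (f u - f v)^2 else 0 := by
  classical
  have hdpos : (0:ℝ) < d := by exact_mod_cast hd
  set L := ((2:ℝ) • (1 : Matrix (Fin n) (Fin n) ℝ) - (2:ℝ) • lazyWalk G d) with hL
  have hinner : ⟪f, Matrix.toEuclideanLin L f⟫ = ∑ u, f u * ∑ v, L u v * f v := by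
    rw [Matrix.toEuclideanLin_apply]
    rw [PiLp.inner_apply]
    apply Finset.sum_congr rfl
    intro u _
    rw [RCLike.inner_apply, starRingEnd_apply, star_trivial]
    rw [mul_comm]; rfl
  rw [hinner]
  have hpt : ∀ u v : Fin n, f u * ((L u v) * f v)
      = (if v = u then ((G.neighborSet u).ncard : ℝ)/d * (f u * f v) else 0)
        + (if G.Adj u v then -(f u * f v)/d else 0) := by
    intro u v
    rw [hL, lentry G d hd u v]
    by_cases h1 : v = u
    · subst h1
      simp only [eq_self_iff_true, if_true, SimpleGraph.irrefl, if_false]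
      ring
    · simp only [if_neg h1]
      by_cases h2 : G.Adj u v <;> simp only [h2, if_true, if_false] <;> ring
  have hstep : ∑ u, f u * ∑ v, L u v * f v
      = (∑ u, ∑ v, if v = u then ((G.neighborSet u).ncard : ℝ)/d * (f u * f v) else 0)
        + ∑ u, ∑ v, if G.Adj u v then -(f u * f v)/d else 0 := by
    rw [← Finset.sum_add_distrib]
    apply Finset.sum_congr rfl
    intro u _
    rw [Finset.mul_sum, ← Finset.sum_add_distrib]
    exact Finset.sum_congr rfl fun v _ => hpt u v
  rw [hstep]
  have hdiag : (∑ u, ∑ v, if v = u then ((G.neighborSet u).ncard : ℝ)/d * (f u * f v) else 0)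
      = ∑ u, ∑ v, if G.Adj u v then (f u)^2/d else 0 := by
    apply Finset.sum_congr rfl
    intro u _
    rw [Finset.sum_ite_eq' univ u (fun v => ((G.neighborSet u).ncard : ℝ)/d * (f u * f v))]
    simp only [Finset.mem_univ, if_true]
    have : ((G.neighborSet u).ncard : ℝ)/d * (f u * f u)
        = (∑ v, if G.Adj u v then (1:ℝ) else 0)/d * (f u)^2 := by
      rw [← ncard_neighborSet_eq]; ring
    rw [this, Finset.sum_div, Finset.sum_mul]
    apply Finset.sum_congr rfl
    intro v _
    by_cases h : G.Adj u v
    · rw [if_pos h, if_pos h]; ring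
    · rw [if_neg h, if_neg h]; ring
  rw [hdiag]
  -- now pure sum manipulation
  have pull : ∀ (g : Fin n → Fin n → ℝ), (∑ u, ∑ v, (g u v)/(d:ℝ)) = (∑ u, ∑ v, g u v)/d := by
    intro g
    rw [Finset.sum_div]
    exact Finset.sum_congr rfl fun u _ => (Finset.sum_div _ _ _).symm
  set X := ∑ u, ∑ v, if G.Adj u v then (f u)^2 else 0 with hX
  set X' := ∑ u, ∑ v, if G.Adj u v then (f v)^2 else 0 with hX'
  set Y := ∑ u, ∑ v, if G.Adj u v then f u * f v else 0 with hY
  have hXX' : X' = X := by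
    rw [hX', hX, Finset.sum_comm]
    apply Finset.sum_congr rfl; intro u _
    apply Finset.sum_congr rfl; intro v _
    simp only [G.adj_comm u v]
  have h1 : (∑ u, ∑ v, if G.Adj u v then (f u)^2/d else 0) = X/d := by
    rw [hX, ← pull]
    apply Finset.sum_congr rfl; intro u _
    apply Finset.sum_congr rfl; intro v _
    by_cases h : G.Adj u v <;> simp [h]
  have h2 : (∑ u, ∑ v, if G.Adj u v then -(f u * f v)/d else 0) = (-Y)/d := by
    have e1 : (∑ u, ∑ v, if G.Adj u v then -(f u * f v)/d else 0)
        = ∑ u, ∑ v, (-(if G.Adj u v then f u * f v else 0))/(d:ℝ) := by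
      apply Finset.sum_congr rfl; intro u _
      apply Finset.sum_congr rfl; intro v _
      by_cases h : G.Adj u v <;> simp [h]
    rw [e1, pull]
    congr 1
    rw [hY, ← Finset.sum_neg_distrib]
    apply Finset.sum_congr rfl; intro u _
    rw [← Finset.sum_neg_distrib]
  have h3 : (∑ u, ∑ v, if G.Adj u v then (f u - f v)^2 else 0) = X + X' - 2*Y := by
    have e1 : (∑ u, ∑ v, if G.Adj u v then (f u - f v)^2 else 0)
        = ∑ u, ∑ v, ((if G.Adj u v then (f u)^2 else 0)
            + (if G.Adj u v then (f v)^2 else 0)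
            - 2 * (if G.Adj u v then f u * f v else 0)) := by
      apply Finset.sum_congr rfl; intro u _
      apply Finset.sum_congr rfl; intro v _
      by_cases h : G.Adj u v <;> simp [h] <;> ring
    rw [e1]
    rw [hX, hX', hY]
    simp only [Finset.sum_sub_distrib, Finset.sum_add_distrib, ← Finset.mul_sum]
  rw [h1, h2, h3, hXX']
  have hdne : (d:ℝ) ≠ 0 := ne_of_gt hdpos
  field_simp
  ring

lemma lazy_symm {n : ℕ} (G : SimpleGraph (Fin n)) (d : ℕ) :
    (Matrix.toEuclideanLin
      ((2:ℝ) • (1 : Matrix (Fin n) (Fin n) ℝ) - (2:ℝ) • lazyWalk G d)).IsSymmetric := by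
  rw [← Matrix.isHermitian_iff_isSymmetric]
  have hW : ∀ i j, lazyWalk G d j i = lazyWalk G d i j := by
    intro i j
    rcases eq_or_ne i j with h | h
    · subst h; rfl
    · simp only [lazyWalk, Matrix.of_apply]
      rw [if_neg h.symm, if_neg h]
      by_cases hadj : G.Adj j i
      · rw [if_pos hadj, if_pos ((G.adj_comm j i).mp hadj)]
      · rw [if_neg hadj, if_neg (fun hc => hadj ((G.adj_comm i j).mp hc))]
  unfold Matrix.IsHermitian
  ext i j
  rw [Matrix.conjTranspose_apply, star_trivial]
  simp only [Matrix.sub_apply, Matrix.smul_apply, smul_eq_mul]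
  rw [hW i j]
  congr 1
  rcases eq_or_ne i j with h | h
  · subst h; rfl
  · rw [Matrix.one_apply_ne h.symm, Matrix.one_apply_ne h]

lemma qbound {n : ℕ} (T : EuclideanSpace ℝ (Fin n) →ₗ[ℝ] EuclideanSpace ℝ (Fin n))
    (hT : T.IsSymmetric) (t : ℝ) (f : EuclideanSpace ℝ (Fin n))
    (hf : f ∈ ⨆ (μ : {μ : ℝ // μ < t}), Module.End.eigenspace T (μ : ℝ)) :
    ⟪f, T f⟫ ≤ t * ‖f‖^2 := by
  classical
  rw [Submodule.mem_iSup_iff_exists_finsupp] at hf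
  obtain ⟨c, hc, hsum⟩ := hf
  have hf' : f = ∑ i ∈ c.support, c i := by rw [← hsum]; rfl
  have hortho : ∀ i j : {μ : ℝ // μ < t}, i ≠ j → ⟪c i, c j⟫ = 0 := by
    intro i j hij
    have hij' : (i : ℝ) ≠ (j : ℝ) := Subtype.coe_injective.ne hij
    exact hT.orthogonalFamily_eigenspaces hij' ⟨c i, hc i⟩ ⟨c j, hc j⟩
  have hTeig : ∀ i, T (c i) = (i : ℝ) • c i := by
    intro i
    exact Module.End.mem_eigenspace_iff.mp (hc i)
  have hTf : T f = ∑ i ∈ c.support, (i : ℝ) • c i := by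
    rw [hf', map_sum]
    exact Finset.sum_congr rfl fun i _ => hTeig i
  have hinner : ⟪f, T f⟫ = ∑ j ∈ c.support, (j : ℝ) * ⟪c j, c j⟫ := by
    rw [hTf, hf', sum_inner]
    apply Finset.sum_congr rfl
    intro i hi_mem
    rw [inner_sum]
    rw [Finset.sum_eq_single i]
    · rw [real_inner_smul_right]
    · intro j _ hji
      rw [real_inner_smul_right, hortho i j (Ne.symm hji), mul_zero]
    · intro hi; exact absurd hi_mem hi
  have hnorm : ‖f‖^2 = ∑ j ∈ c.support, ⟪c j, c j⟫ := by
    rw [← real_inner_self_eq_norm_sq]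
    nth_rewrite 1 [hf']
    nth_rewrite 1 [hf']
    rw [sum_inner]
    apply Finset.sum_congr rfl
    intro i hi_mem
    rw [inner_sum]
    rw [Finset.sum_eq_single i]
    · intro j _ hji
      exact hortho i j (Ne.symm hji)
    · intro hi; exact absurd hi_mem hi
  rw [hinner, hnorm, Finset.mul_sum]
  apply Finset.sum_le_sum
  intro j _
  have h1 : 0 ≤ ⟪c j, c j⟫ := real_inner_self_nonneg
  exact mul_le_mul_of_nonneg_right (le_of_lt j.2) h1

lemma cond_rearrange {n : ℕ} (G : SimpleGraph (Fin n)) (d : ℕ) (hd : 1 ≤ d)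
    (C : Finset (Fin n)) (φ : ℝ) (h : InnerConductanceGE G d C φ) :
    ∀ S ⊆ C, S.Nonempty → 2 * S.card ≤ C.card →
      φ * (d * S.card) ≤ (cutEdgesIn G C S : ℝ) := by
  intro S hS hne hcard
  have h1 := h S hS hne hcard
  have h2 : (0:ℝ) < d * S.card := by
    have : (0:ℝ) < (d:ℝ) := by exact_mod_cast hd
    have : (0:ℝ) < (S.card : ℝ) := by exact_mod_cast Finset.card_pos.mpr hne
    positivity
  rw [le_div_iff₀ h2] at h1
  exact h1

end CheegerHelpers

theorem stmt3 (d : ℕ) (hd : 1 ≤ d) :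
    ∃ c : ℝ, 0 < c ∧ ∀ (φ : ℝ), 0 < φ → φ ≤ 1 →
      ∀ (n : ℕ), 3 ≤ n → ∀ G : SimpleGraph (Fin n), MaxDegreeLE G d →
        Clusterable2 G d φ →
        Module.finrank ℝ
          ↥(⨆ μ : {μ : ℝ // μ < φ ^ 2 / (16 * c)},
            Module.End.eigenspace
              (Matrix.toEuclideanLin
                ((2 : ℝ) • (1 : Matrix (Fin n) (Fin n) ℝ) - (2 : ℝ) • lazyWalk G d))
              (μ : ℝ)) ≤ 2 := by
  classical
  refine ⟨1, one_pos, ?_⟩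
  intro φ hφ hφ1 n hn G hdeg hclus
  haveI : DecidableRel G.Adj := Classical.decRel _
  obtain ⟨C₁, C₂, hdisj, hunion, hic1, hic2⟩ :
      ∃ C₁ C₂ : Finset (Fin n), Disjoint C₁ C₂ ∧ C₁ ∪ C₂ = Finset.univ ∧
        InnerConductanceGE G d C₁ φ ∧ InnerConductanceGE G d C₂ φ := by
    rcases hclus with h | ⟨C₁, C₂, _, _, hdisj, hunion, h1, h2⟩
    · refine ⟨Finset.univ, ∅, by simp, by simp, h, ?_⟩
      intro S hS hne _
      rw [Finset.subset_empty.mp hS] at hne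
      exact absurd hne (by simp)
    · exact ⟨C₁, C₂, hdisj, hunion, h1, h2⟩
  set T := Matrix.toEuclideanLin
    ((2 : ℝ) • (1 : Matrix (Fin n) (Fin n) ℝ) - (2 : ℝ) • lazyWalk G d) with hT
  set x₁ : EuclideanSpace ℝ (Fin n) := WithLp.toLp 2 (fun v => if v ∈ C₁ then (1:ℝ) else 0) with hx₁
  set x₂ : EuclideanSpace ℝ (Fin n) := WithLp.toLp 2 (fun v => if v ∈ C₂ then (1:ℝ) else 0) with hx₂
  set W := Submodule.span ℝ ({x₁, x₂} : Set (EuclideanSpace ℝ (Fin n))) with hW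
  have hns : ∀ f : EuclideanSpace ℝ (Fin n), ‖f‖^2 = ∑ v, (f v)^2 := by
    intro f
    rw [← real_inner_self_eq_norm_sq, PiLp.inner_apply]
    apply Finset.sum_congr rfl
    intro v _
    rw [RCLike.inner_apply, starRingEnd_apply, star_trivial]
    ring
  have hiz : ∀ (C : Finset (Fin n)) (x f : EuclideanSpace ℝ (Fin n)),
      (∀ v, x v = if v ∈ C then (1:ℝ) else 0) → ⟪x, f⟫ = ∑ v ∈ C, f v := by
    intro C x f hx
    rw [PiLp.inner_apply]
    have h2 : ∀ v : Fin n, (inner ℝ (x v) (f v) : ℝ) = if v ∈ C then f v else 0 := by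
      intro v
      rw [RCLike.inner_apply, starRingEnd_apply, star_trivial, hx v]
      by_cases h : v ∈ C <;> simp [h]
    rw [Finset.sum_congr rfl fun v _ => h2 v]
    rw [Finset.sum_ite_mem, Finset.univ_inter]
  have hkey : ∀ f : EuclideanSpace ℝ (Fin n),
      f ∈ (⨆ μ : {μ : ℝ // μ < φ ^ 2 / (16 * 1)}, Module.End.eigenspace T (μ : ℝ)) →
      f ∈ Wᗮ → f = 0 := by
    intro f hfE hfW
    by_contra hf0
    have hx₁W : x₁ ∈ W := Submodule.subset_span (Set.mem_insert _ _)
    have hx₂W : x₂ ∈ W := Submodule.subset_span (Set.mem_insert_of_mem _ rfl)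
    have hz1 : ∑ v ∈ C₁, f v = 0 := by
      rw [← hiz C₁ x₁ f (fun v => rfl)]
      exact (Submodule.mem_orthogonal W f).mp hfW x₁ hx₁W
    have hz2 : ∑ v ∈ C₂, f v = 0 := by
      rw [← hiz C₂ x₂ f (fun v => rfl)]
      exact (Submodule.mem_orthogonal W f).mp hfW x₂ hx₂W
    have hch1 := cheeger_main G d hd hdeg C₁ φ hφ
      (cond_rearrange G d hd C₁ φ hic1) f hz1
    have hch2 := cheeger_main G d hd hdeg C₂ φ hφ
      (cond_rearrange G d hd C₂ φ hic2) f hz2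
    -- energy splitting
    have hsumsplit : ∀ g : Fin n → ℝ, ∑ v, g v = ∑ v ∈ C₁, g v + ∑ v ∈ C₂, g v := by
      intro g
      rw [← Finset.sum_union hdisj, hunion]
    have hEsplit :
        (∑ u ∈ C₁, ∑ v ∈ C₁, if G.Adj u v then (f u - f v)^2 else 0)
          + (∑ u ∈ C₂, ∑ v ∈ C₂, if G.Adj u v then (f u - f v)^2 else 0)
        ≤ ∑ u, ∑ v, if G.Adj u v then (f u - f v)^2 else 0 := by
      rw [hsumsplit (fun u => ∑ v, if G.Adj u v then (f u - f v)^2 else 0)]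
      have hrow : ∀ (C : Finset (Fin n)) (u : Fin n),
          (∑ v ∈ C, if G.Adj u v then (f u - f v)^2 else 0)
            ≤ ∑ v, if G.Adj u v then (f u - f v)^2 else 0 := by
        intro C u
        apply Finset.sum_le_sum_of_subset_of_nonneg (Finset.subset_univ C)
        intro v _ _
        positivity
      exact add_le_add (Finset.sum_le_sum fun u _ => hrow C₁ u)
        (Finset.sum_le_sum fun u _ => hrow C₂ u)
    have hnormsplit : ∑ v, (f v)^2 = ∑ v ∈ C₁, (f v)^2 + ∑ v ∈ C₂, (f v)^2 :=
      hsumsplit (fun v => (f v)^2)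
    have hdpos : (0:ℝ) < d := by exact_mod_cast hd
    have hlow : φ^2/2 * ‖f‖^2 ≤ ⟪f, T f⟫ := by
      rw [hT, lazy_qform G d hd f]
      have h1 : φ^2 * d * (∑ v ∈ C₁, (f v)^2 + ∑ v ∈ C₂, (f v)^2)
          ≤ ∑ u, ∑ v, if G.Adj u v then (f u - f v)^2 else 0 := by
        calc φ^2 * d * (∑ v ∈ C₁, (f v)^2 + ∑ v ∈ C₂, (f v)^2)
            = φ^2 * d * ∑ v ∈ C₁, (f v)^2 + φ^2 * d * ∑ v ∈ C₂, (f v)^2 := by ring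
          _ ≤ _ := le_trans (add_le_add hch1 hch2) hEsplit
      rw [hns f, hnormsplit]
      have h2 : φ^2/2 * (∑ v ∈ C₁, (f v)^2 + ∑ v ∈ C₂, (f v)^2)
          = 1/(2*(d:ℝ)) * (φ^2 * d * (∑ v ∈ C₁, (f v)^2 + ∑ v ∈ C₂, (f v)^2)) := by
        field_simp
      rw [h2]
      exact mul_le_mul_of_nonneg_left h1 (by positivity)
    have hup : ⟪f, T f⟫ ≤ φ^2/(16*1) * ‖f‖^2 :=
      qbound T (lazy_symm G d) _ f hfE
    have hnf : 0 < ‖f‖^2 := pow_pos (norm_pos_iff.mpr hf0) 2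
    nlinarith [hlow, hup, hnf, mul_pos (mul_pos hφ hφ) hnf]
  -- dimension count
  have hWle : Module.finrank ℝ W ≤ 2 := by
    refine le_trans (finrank_span_le_card _) ?_
    rw [Set.toFinset_insert, Set.toFinset_singleton]
    exact le_trans (Finset.card_insert_le _ _) (by simp)
  set E := ⨆ μ : {μ : ℝ // μ < φ ^ 2 / (16 * 1)}, Module.End.eigenspace T (μ : ℝ) with hE
  have hinj : Function.Injective
      (W.orthogonalProjection.toLinearMap.comp E.subtype) := by
    rw [← LinearMap.ker_eq_bot, LinearMap.ker_eq_bot']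
    intro x hx
    have hx' : W.orthogonalProjection (x : EuclideanSpace ℝ (Fin n)) = 0 := hx
    have hxW : (x : EuclideanSpace ℝ (Fin n)) ∈ Wᗮ :=
      Submodule.orthogonalProjectionOnto_eq_zero_iff.mp hx'
    have := hkey x x.2 hxW
    exact Subtype.ext this
  calc Module.finrank ℝ E ≤ Module.finrank ℝ W :=
        LinearMap.finrank_le_finrank_of_injective hinj
    _ ≤ 2 := hWle
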